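/- Over a binary alphabet {a, b}, for every p ≥ 1, the word a^{p+1} b^{p+1} a^{p+1} b^p is primitive but not ins-robust. -/

import Mathlib

/-- `wpow v n` is the word `v` repeated `n` times. -/
def wpow {V : Type*} (v : List V) : ℕ → List V
  | 0 => []
  | n + 1 => v ++ wpow v n

/-- A word is primitive if it is nonempty and not a proper power. -/
def Primitive {V : Type*} (w : List V) : Prop :=
  w ≠ [] ∧ ∀ (v : List V) (n : ℕ), w = wpow v n → n = 1

/-- A word is ins-robust if it is primitive and inserting any letter at any
position yields a primitive word. -/
def InsRobust {V : Type*} (w : List V) : Prop :=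
  Primitive w ∧ ∀ (x y : List V) (a : V), w = x ++ y → Primitive (x ++ a :: y)

/-- `HasPeriod w p` : the word `w` is periodic with period `p`. -/
def HasPeriod {V : Type*} (w : List V) (p : ℕ) : Prop :=
  ∀ i, i + p < w.length → w[i]? = w[i + p]?

lemma wpow_zero {V : Type*} (v : List V) : wpow v 0 = [] := rfl

lemma wpow_succ {V : Type*} (v : List V) (n : ℕ) : wpow v (n+1) = v ++ wpow v n := rfl

lemma wpow_replicate {V : Type*} (x : V) (n : ℕ) : wpow [x] n = List.replicate n x := by
  induction n with
  | zero => rfl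
  | succ n ih => simp [wpow_succ, ih, List.replicate_succ]

lemma wpow_length {V : Type*} (v : List V) (n : ℕ) : (wpow v n).length = n * v.length := by
  induction n with
  | zero => simp [wpow_zero]
  | succ n ih => simp [wpow_succ, ih, Nat.succ_mul, Nat.add_comm]

lemma wpow_comm {V : Type*} (v : List V) (n : ℕ) : v ++ wpow v n = wpow v n ++ v := by
  induction n with
  | zero => simp [wpow_zero]
  | succ n ih => rw [wpow_succ, List.append_assoc, ih]

lemma period_of_comm {V : Type*} {v w : List V} (h : v ++ w = w ++ v) :
    ∀ i, i + v.length < w.length → w[i]? = w[i + v.length]? := by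
  intro i hi
  have h1 : w[i + v.length]? = (w ++ v)[i + v.length]? :=
    (List.getElem?_append_left hi).symm
  rw [h1, ← h, List.getElem?_append_right (by omega)]
  simp

theorem stmt14 {V : Type*} (a b : V) (hab : a ≠ b) (hbin : ∀ c : V, c = a ∨ c = b)
    (p : ℕ) (hp : 1 ≤ p) :
    Primitive (wpow [a] (p+1) ++ wpow [b] (p+1) ++ wpow [a] (p+1) ++ wpow [b] p) ∧
    ¬ InsRobust (wpow [a] (p+1) ++ wpow [b] (p+1) ++ wpow [a] (p+1) ++ wpow [b] p) := by
  have hrw : wpow [a] (p+1) ++ wpow [b] (p+1) ++ wpow [a] (p+1) ++ wpow [b] p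
      = List.replicate (p+1) a ++ List.replicate (p+1) b ++ List.replicate (p+1) a
        ++ List.replicate p b := by
    simp [wpow_replicate]
  rw [hrw]
  generalize hweq : List.replicate (p+1) a ++ List.replicate (p+1) b ++ List.replicate (p+1) a
        ++ List.replicate p b = w
  have hwlen : w.length = 4*p + 3 := by rw [← hweq]; simp; omega
  have getA : ∀ i, i ≤ p → w[i]? = some a := by
    intro i hi
    rw [← hweq, List.append_assoc, List.append_assoc,
      List.getElem?_append_left (by simp; omega)]
    simp [List.getElem?_replicate]; omega
  have getB : ∀ i, p + 1 ≤ i → i ≤ 2*p + 1 → w[i]? = some b := by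
    intro i h1 h2
    rw [← hweq, List.append_assoc, List.append_assoc,
      List.getElem?_append_right (by simp; omega),
      List.getElem?_append_left (by simp; omega)]
    simp [List.getElem?_replicate]; omega
  have hprim : Primitive w := by
    constructor
    · intro h; rw [h] at hwlen; simp at hwlen
    · intro v n heq
      by_contra hn1
      have hn0 : n ≠ 0 := by
        rintro rfl
        rw [heq, wpow_zero] at hwlen; simp at hwlen
      have hn2 : 2 ≤ n := by omega
      have hlen : n * v.length = 4*p + 3 := by
        rw [heq, wpow_length] at hwlen; omega
      have hL1 : 1 ≤ v.length := by
        rcases Nat.eq_zero_or_pos v.length with h | h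
        · rw [h, Nat.mul_zero] at hlen; omega
        · exact h
      have hLle : v.length ≤ 2*p + 1 := by nlinarith
      have hcomm : v ++ w = w ++ v := by
        rw [heq]; exact wpow_comm v n
      have hper := period_of_comm hcomm
      rcases le_or_gt v.length (p + 1) with hc | hc
      · have h := hper (p + 1 - v.length) (by omega)
        rw [getA _ (by omega), (by omega : p + 1 - v.length + v.length = p + 1),
          getB _ (by omega) (by omega)] at h
        exact hab (Option.some_injective _ h)
      · have h := hper 0 (by omega)
        rw [getA 0 (by omega), (by omega : 0 + v.length = v.length),
          getB _ (by omega) (by omega)] at h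
        exact hab (Option.some_injective _ h)
  refine ⟨hprim, ?_⟩
  intro ⟨_, hins⟩
  have h := hins w [] b (by simp)
  have heq : w ++ b :: [] = wpow (List.replicate (p+1) a ++ List.replicate (p+1) b) 2 := by
    rw [← hweq]
    simp [wpow_succ, wpow_zero, (List.replicate_succ' : List.replicate (p+1) b = List.replicate p b ++ [b])]
  exact (by omega : (2:ℕ) ≠ 1) (h.2 _ 2 heq)
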